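/- Let f : D → ℝ be of class C^{1,1}(D) on an open set D ⊆ X. If f is twice continuously Gâteaux differentiable at x̂ ∈ D, then ∂²f(x̂)(d) = {f''(x̂)(d)} for every d ∈ X, i.e., the second-order subdifferential is the singleton consisting of the second Gâteaux derivative applied to d. -/

import Mathlib

open Filter Set

/-- The Clarke generalized directional derivative of `g` at `x₀` in direction `h`. -/
noncomputable def clarkeDeriv {X : Type*} [NormedAddCommGroup X] [NormedSpace ℝ X]
    (g : X → ℝ) (x₀ h : X) : ℝ :=
  Filter.limsup (fun p : X × ℝ => (g (p.1 + p.2 • h) - g p.1) / p.2)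
    ((nhds x₀) ×ˢ (nhdsWithin 0 (Set.Ioi 0)))

/-- The Clarke subdifferential of `g` at `x₀`. -/
def clarkeSubdiff {X : Type*} [NormedAddCommGroup X] [NormedSpace ℝ X]
    (g : X → ℝ) (x₀ : X) : Set (X →L[ℝ] ℝ) :=
  {L | ∀ h, L h ≤ clarkeDeriv g x₀ h}

/-- `f'` is the Gâteaux derivative of `f` on `D`. -/
def IsGateauxDerivOn {X E : Type*} [NormedAddCommGroup X] [NormedSpace ℝ X]
    [NormedAddCommGroup E] [NormedSpace ℝ E]
    (f : X → E) (f' : X → X →L[ℝ] E) (D : Set X) : Prop :=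
  ∀ x ∈ D, ∀ h : X, HasDerivAt (fun t : ℝ => f (x + t • h)) (f' x h) 0

/-- `g` is locally Lipschitz on the set `D`. -/
def LocallyLipschitzOnSet {X E : Type*} [NormedAddCommGroup X] [NormedSpace ℝ X]
    [NormedAddCommGroup E] (g : X → E) (D : Set X) : Prop :=
  ∀ x ∈ D, ∃ ε > 0, ∃ K : NNReal, LipschitzOnWith K g (Metric.ball x ε ∩ D)

/-- `f` is of class `C^{1,1}` on `D`, witnessed by its Gâteaux derivative `f'`. -/
def IsC11On {X : Type*} [NormedAddCommGroup X] [NormedSpace ℝ X]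
    (f : X → ℝ) (f' : X → X →L[ℝ] ℝ) (D : Set X) : Prop :=
  IsGateauxDerivOn f f' D ∧ LocallyLipschitzOnSet f' D

/-- The second-order subdifferential `∂²f(x₀)(d) = ∂⟨f'(·), d⟩(x₀)`. -/
def secondSubdiff {X : Type*} [NormedAddCommGroup X] [NormedSpace ℝ X]
    (f' : X → X →L[ℝ] ℝ) (x₀ d : X) : Set (X →L[ℝ] ℝ) :=
  clarkeSubdiff (fun x => f' x d) x₀

lemma mvt1 {E : Type*} [NormedAddCommGroup E] [NormedSpace ℝ E]
    {φ ψ : ℝ → E} {A : E} {C : ℝ}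
    (hφ : ∀ s ∈ Icc (0:ℝ) 1, HasDerivAt φ (ψ s) s)
    (hC : ∀ s ∈ Icc (0:ℝ) 1, ‖ψ s - A‖ ≤ C) :
    ‖φ 1 - φ 0 - A‖ ≤ C := by
  have key := norm_image_sub_le_of_norm_deriv_le_segment'
    (f := fun s => φ s - s • A) (f' := fun s => ψ s - A) (C := C)
    (fun s hs => (((hφ s hs).sub (by simpa using (hasDerivAt_id s).smul_const A))).hasDerivWithinAt)
    (fun s hs => hC s (Ico_subset_Icc_self hs)) 1 (right_mem_Icc.2 zero_le_one)
  simp only [one_smul, zero_smul, sub_zero] at key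
  calc ‖φ 1 - φ 0 - A‖ = ‖(φ 1 - A) - φ 0‖ := by congr 1; abel
    _ ≤ C * 1 := key
    _ = C := by ring

lemma line_deriv {X E : Type*} [NormedAddCommGroup X] [NormedSpace ℝ X]
    [NormedAddCommGroup E] [NormedSpace ℝ E]
    {g : X → E} {g' : X → X →L[ℝ] E} {D : Set X}
    (hg : IsGateauxDerivOn g g' D) {x v : X} {s : ℝ} (hx : x + s • v ∈ D) :
    HasDerivAt (fun t : ℝ => g (x + t • v)) (g' (x + s • v) v) s := by
  have h0 : HasDerivAt (fun t : ℝ => g ((x + s • v) + t • v)) (g' (x + s • v) v) (s - s) := by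
    rw [sub_self]; exact hg _ hx v
  have h1 : HasDerivAt (fun t : ℝ => t - s) 1 s := by
    simpa using (hasDerivAt_id s).sub_const s
  have h2 := HasDerivAt.scomp_of_eq (h := fun t : ℝ => t - s) (x := s)
    (hg _ hx v) h1 (by simp)
  have heq : ((fun t : ℝ => g ((x + s • v) + t • v)) ∘ (fun t : ℝ => t - s))
      = fun t : ℝ => g (x + t • v) := by
    funext t
    simp only [Function.comp_apply]
    congr 1
    module
  rw [heq, one_smul] at h2
  exact h2

section Main
variable {X : Type*} [NormedAddCommGroup X] [NormedSpace ℝ X]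

/-- Gâteaux differentiable on an open set with locally Lipschitz derivative gives
Fréchet differentiability near a point. -/
lemma fderiv_of_gateaux_lip {D : Set X} (hD : IsOpen D) {f : X → ℝ} {f' : X → X →L[ℝ] ℝ}
    (hG : IsGateauxDerivOn f f' D) {x₀ : X} (hx₀ : x₀ ∈ D)
    {ε : ℝ} (hε : 0 < ε) {K : NNReal} (hK : LipschitzOnWith K f' (Metric.ball x₀ ε ∩ D)) :
    ∀ᶠ y in nhds x₀, HasFDerivAt f (f' y) y := by
  obtain ⟨ε₁, hε₁, hball⟩ := Metric.isOpen_iff.1 hD x₀ hx₀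
  set r := min ε ε₁ with hr
  have hrpos : 0 < r := lt_min hε hε₁
  have hsub : Metric.ball x₀ r ⊆ Metric.ball x₀ ε ∩ D :=
    fun z hz => ⟨Metric.ball_subset_ball (min_le_left _ _) hz,
      hball (Metric.ball_subset_ball (min_le_right _ _) hz)⟩
  have hKr := hK.mono hsub
  filter_upwards [Metric.ball_mem_nhds x₀ (half_pos hrpos)] with y hy
  have hyD : y ∈ Metric.ball x₀ r := Metric.ball_subset_ball (half_le_self hrpos.le) hy
  rw [hasFDerivAt_iff_isLittleO_nhds_zero, Asymptotics.isLittleO_iff]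
  intro c hc
  have hδ : 0 < min (r/2) (c / (K + 1)) := by positivity
  filter_upwards [Metric.ball_mem_nhds (0 : X) hδ] with v hv
  rw [Metric.mem_ball, dist_zero_right] at hv
  have hv1 : ‖v‖ < r/2 := hv.trans_le (min_le_left _ _)
  have hv2 : ‖v‖ < c / (K + 1) := hv.trans_le (min_le_right _ _)
  -- segment points in ball
  have hseg : ∀ s ∈ Icc (0:ℝ) 1, y + s • v ∈ Metric.ball x₀ r := by
    intro s hs
    rw [Metric.mem_ball]
    calc dist (y + s • v) x₀ ≤ dist (y + s • v) y + dist y x₀ := dist_triangle _ _ _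
      _ < r/2 + r/2 := by
          apply add_lt_add_of_le_of_lt _ (Metric.mem_ball.1 hy)
          rw [dist_eq_norm, add_sub_cancel_left, norm_smul, Real.norm_eq_abs,
            abs_of_nonneg hs.1]
          calc s * ‖v‖ ≤ 1 * ‖v‖ := mul_le_mul_of_nonneg_right hs.2 (norm_nonneg v)
            _ = ‖v‖ := one_mul _
            _ ≤ r/2 := hv1.le
      _ = r := by ring
  have hbound : ∀ s ∈ Icc (0:ℝ) 1, ‖f' (y + s • v) v - f' y v‖ ≤ (K * ‖v‖) * ‖v‖ := by
    intro s hs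
    calc ‖f' (y + s • v) v - f' y v‖ = ‖(f' (y + s • v) - f' y) v‖ := by
            simp [ContinuousLinearMap.sub_apply]
        _ ≤ ‖f' (y + s • v) - f' y‖ * ‖v‖ := (f' (y + s • v) - f' y).le_opNorm v
        _ ≤ (K * ‖y + s • v - y‖) * ‖v‖ := by
            apply mul_le_mul_of_nonneg_right _ (norm_nonneg v)
            have := hKr.dist_le_mul _ (hseg s hs) _ hyD
            rwa [dist_eq_norm, dist_eq_norm] at this
        _ ≤ (K * ‖v‖) * ‖v‖ := by
            apply mul_le_mul_of_nonneg_right _ (norm_nonneg v)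
            apply mul_le_mul_of_nonneg_left _ (NNReal.coe_nonneg K)
            rw [add_sub_cancel_left, norm_smul, Real.norm_eq_abs, abs_of_nonneg hs.1]
            calc s * ‖v‖ ≤ 1 * ‖v‖ := mul_le_mul_of_nonneg_right hs.2 (norm_nonneg v)
              _ = ‖v‖ := one_mul _
  have key : ‖f (y + v) - f y - f' y v‖ ≤ (K * ‖v‖) * ‖v‖ := by
    have H := mvt1 (φ := fun s : ℝ => f (y + s • v)) (ψ := fun s => f' (y + s • v) v)
      (A := f' y v) (C := (K * ‖v‖) * ‖v‖)
      (fun s hs => line_deriv hG (hsub (hseg s hs)).2) hbound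
    simpa using H
  calc ‖f (y + v) - f y - f' y v‖ ≤ (K * ‖v‖) * ‖v‖ := key
    _ ≤ c * ‖v‖ := by
        apply mul_le_mul_of_nonneg_right _ (norm_nonneg v)
        calc (K : ℝ) * ‖v‖ ≤ (K + 1) * ‖v‖ := by
              apply mul_le_mul_of_nonneg_right _ (norm_nonneg v); linarith
          _ ≤ (K + 1) * (c / (K + 1)) := by
              apply mul_le_mul_of_nonneg_left hv2.le; positivity
          _ = c := by field_simp
end Main

section Main2
variable {X : Type*} [NormedAddCommGroup X] [NormedSpace ℝ X]
  {E : Type*} [NormedAddCommGroup E] [NormedSpace ℝ E]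

lemma fderiv_of_gateaux_cont {D : Set X} (hD : IsOpen D) {g : X → E} {g' : X → X →L[ℝ] E}
    (hG : IsGateauxDerivOn g g' D) {x₀ : X} (hx₀ : x₀ ∈ D) (hc : ContinuousAt g' x₀) :
    HasFDerivAt g (g' x₀) x₀ := by
  rw [hasFDerivAt_iff_isLittleO_nhds_zero, Asymptotics.isLittleO_iff]
  intro c hc'
  have hev : ∀ᶠ z in nhds x₀, z ∈ D ∧ ‖g' z - g' x₀‖ ≤ c := by
    filter_upwards [hD.mem_nhds hx₀,
      Metric.tendsto_nhds.1 hc c hc'] with z h1 h2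
    exact ⟨h1, by rw [dist_eq_norm] at h2; exact h2.le⟩
  obtain ⟨δ, hδ, hδev⟩ := Metric.eventually_nhds_iff.1 hev
  filter_upwards [Metric.ball_mem_nhds (0 : X) hδ] with v hv
  rw [Metric.mem_ball, dist_zero_right] at hv
  have hseg : ∀ s ∈ Icc (0:ℝ) 1, dist (x₀ + s • v) x₀ < δ := by
    intro s hs
    rw [dist_eq_norm, add_sub_cancel_left, norm_smul, Real.norm_eq_abs, abs_of_nonneg hs.1]
    calc s * ‖v‖ ≤ 1 * ‖v‖ := mul_le_mul_of_nonneg_right hs.2 (norm_nonneg v)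
      _ = ‖v‖ := one_mul _
      _ < δ := hv
  have hbound : ∀ s ∈ Icc (0:ℝ) 1, ‖g' (x₀ + s • v) v - g' x₀ v‖ ≤ c * ‖v‖ := by
    intro s hs
    calc ‖g' (x₀ + s • v) v - g' x₀ v‖ = ‖(g' (x₀ + s • v) - g' x₀) v‖ := by
          simp [ContinuousLinearMap.sub_apply]
      _ ≤ ‖g' (x₀ + s • v) - g' x₀‖ * ‖v‖ := (g' (x₀ + s • v) - g' x₀).le_opNorm v
      _ ≤ c * ‖v‖ := mul_le_mul_of_nonneg_right (hδev (hseg s hs)).2 (norm_nonneg v)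
  have H := mvt1 (φ := fun s : ℝ => g (x₀ + s • v)) (ψ := fun s => g' (x₀ + s • v) v)
    (A := g' x₀ v) (C := c * ‖v‖)
    (fun s hs => line_deriv hG (hδev (hseg s hs)).1) hbound
  simpa using H

end Main2

section Main3
variable {X : Type*} [NormedAddCommGroup X] [NormedSpace ℝ X]

lemma clarke_tendsto {D : Set X} (hD : IsOpen D) {f' : X → X →L[ℝ] ℝ}
    {f'' : X → X →L[ℝ] (X →L[ℝ] ℝ)} (hf'' : IsGateauxDerivOn f' f'' D)
    {x₀ : X} (hx₀ : x₀ ∈ D) (hcont : ContinuousAt f'' x₀) (d h : X) :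
    Tendsto (fun p : X × ℝ => (f' (p.1 + p.2 • h) d - f' p.1 d) / p.2)
      ((nhds x₀) ×ˢ (nhdsWithin 0 (Set.Ioi 0))) (nhds (f'' x₀ h d)) := by
  rw [Metric.tendsto_nhds]
  intro ε hε
  set c := ε / (2 * (‖h‖ + 1) * (‖d‖ + 1)) with hc
  have hcpos : 0 < c := by positivity
  have hev : ∀ᶠ z in nhds x₀, z ∈ D ∧ ‖f'' z - f'' x₀‖ ≤ c := by
    filter_upwards [hD.mem_nhds hx₀, hcont.tendsto (Metric.ball_mem_nhds (f'' x₀) hcpos : Metric.ball (f'' x₀) c ∈ nhds (f'' x₀))] with z h1 h2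
    have h2 : dist (f'' z) (f'' x₀) < c := h2
    have hdn : dist (f'' z) (f'' x₀) = ‖f'' z - f'' x₀‖ := by exact dist_eq_norm (f'' z) (f'' x₀)
    exact ⟨h1, by linarith⟩
  obtain ⟨δ, hδ, hδev⟩ := Metric.eventually_nhds_iff.1 hev
  set τ := δ / (2 * (‖h‖ + 1)) with hτ
  have hτpos : 0 < τ := by positivity
  have hmem : (Metric.ball x₀ (δ/2)) ×ˢ (Ioo (0:ℝ) τ) ∈
      (nhds x₀) ×ˢ (nhdsWithin 0 (Set.Ioi 0)) :=
    Filter.prod_mem_prod (Metric.ball_mem_nhds x₀ (by positivity))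
      (Ioo_mem_nhdsGT_of_mem ⟨le_refl 0, hτpos⟩)
  filter_upwards [hmem] with p hp
  obtain ⟨hx, ht⟩ := hp
  set x := p.1
  set t := p.2
  have htpos : 0 < t := ht.1
  have hth : t * ‖h‖ < δ / 2 := by
    calc t * ‖h‖ ≤ t * (‖h‖ + 1) := by nlinarith [htpos]
      _ < τ * (‖h‖ + 1) := by
            apply mul_lt_mul_of_pos_right ht.2; positivity
      _ = δ / 2 := by rw [hτ]; field_simp
  have hseg : ∀ s ∈ Icc (0:ℝ) 1, dist (x + s • (t • h)) x₀ < δ := by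
    intro s hs
    calc dist (x + s • (t • h)) x₀ ≤ dist (x + s • (t • h)) x + dist x x₀ := dist_triangle _ _ _
      _ < δ/2 + δ/2 := by
          apply add_lt_add_of_le_of_lt _ (Metric.mem_ball.1 hx)
          rw [dist_eq_norm, add_sub_cancel_left, norm_smul, norm_smul, Real.norm_eq_abs,
            Real.norm_eq_abs, abs_of_nonneg hs.1, abs_of_pos htpos]
          calc s * (t * ‖h‖) ≤ 1 * (t * ‖h‖) := by
                apply mul_le_mul_of_nonneg_right hs.2; positivity
            _ = t * ‖h‖ := one_mul _
            _ ≤ δ/2 := hth.le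
      _ = δ := by ring
  have hderiv : ∀ s ∈ Icc (0:ℝ) 1,
      HasDerivAt (fun u : ℝ => f' (x + u • (t • h)) d)
        (f'' (x + s • (t • h)) (t • h) d) s := by
    intro s hs
    have hL : HasDerivAt (fun u : ℝ => f' (x + u • (t • h)))
        (f'' (x + s • (t • h)) (t • h)) s := line_deriv hf'' (hδev (hseg s hs)).1
    have := hL.clm_apply (hasDerivAt_const s d)
    simpa using this
  have hbound : ∀ s ∈ Icc (0:ℝ) 1,
      ‖f'' (x + s • (t • h)) (t • h) d - f'' x₀ (t • h) d‖ ≤ c * (t * ‖h‖) * ‖d‖ := by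
    intro s hs
    calc ‖f'' (x + s • (t • h)) (t • h) d - f'' x₀ (t • h) d‖
        = ‖((f'' (x + s • (t • h)) - f'' x₀) (t • h)) d‖ := by
          simp only [ContinuousLinearMap.sub_apply]
      _ ≤ ‖(f'' (x + s • (t • h)) - f'' x₀) (t • h)‖ * ‖d‖ :=
          ContinuousLinearMap.le_opNorm _ d
      _ ≤ (‖f'' (x + s • (t • h)) - f'' x₀‖ * ‖t • h‖) * ‖d‖ := by
          apply mul_le_mul_of_nonneg_right _ (norm_nonneg d)
          exact ContinuousLinearMap.le_opNorm _ _
      _ ≤ c * (t * ‖h‖) * ‖d‖ := by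
          apply mul_le_mul_of_nonneg_right _ (norm_nonneg d)
          rw [norm_smul, Real.norm_eq_abs, abs_of_pos htpos]
          apply mul_le_mul_of_nonneg_right (hδev (hseg s hs)).2
          positivity
  have key := mvt1 (φ := fun s : ℝ => f' (x + s • (t • h)) d)
    (ψ := fun s => f'' (x + s • (t • h)) (t • h) d)
    (A := f'' x₀ (t • h) d) (C := c * (t * ‖h‖) * ‖d‖) hderiv hbound
  simp only [one_smul, zero_smul, add_zero] at key
  have hsm : f'' x₀ (t • h) d = t * f'' x₀ h d := by
    rw [map_smul]; simp
  rw [hsm] at key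
  have heq : (f' (x + t • h) d - f' x d) / t - f'' x₀ h d
      = (f' (x + t • h) d - f' x d - t * f'' x₀ h d) / t := by
    field_simp
  rw [Real.dist_eq, heq, abs_div, abs_of_pos htpos]
  rw [div_lt_iff₀ htpos]
  calc |f' (x + t • h) d - f' x d - t * f'' x₀ h d| ≤ c * (t * ‖h‖) * ‖d‖ := key
    _ ≤ c * (t * (‖h‖ + 1)) * (‖d‖ + 1) := by
        gcongr <;> linarith [norm_nonneg h, norm_nonneg d]
    _ = (ε / 2) * t := by rw [hc]; field_simp
    _ < ε * t := by nlinarith [htpos, hε]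

end Main3

theorem stmt4 {X : Type*} [NormedAddCommGroup X] [NormedSpace ℝ X]
    {D : Set X} (hD : IsOpen D) (f : X → ℝ) (f' : X → X →L[ℝ] ℝ)
    (hf : IsC11On f f' D) {x₀ : X} (hx₀ : x₀ ∈ D)
    (f'' : X → X →L[ℝ] (X →L[ℝ] ℝ))
    (hf'' : IsGateauxDerivOn f' f'' D) (hcont : ContinuousAt f'' x₀) (d : X) :
    secondSubdiff f' x₀ d = {f'' x₀ d} := by
  obtain ⟨hG, hLip⟩ := hf
  obtain ⟨ε, hε, K, hK⟩ := hLip x₀ hx₀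
  have sub1 : ∀ᶠ y in nhds x₀, HasFDerivAt f (f' y) y :=
    fderiv_of_gateaux_lip hD hG hx₀ hε hK
  have sub2 : HasFDerivAt f' (f'' x₀) x₀ := fderiv_of_gateaux_cont hD hf'' hx₀ hcont
  have hsymm : ∀ v w : X, f'' x₀ v w = f'' x₀ w v :=
    second_derivative_symmetric_of_eventually sub1 sub2
  haveI : ((nhds x₀) ×ˢ (nhdsWithin (0:ℝ) (Set.Ioi 0))).NeBot :=
    Filter.prod_neBot.2 ⟨inferInstance, nhdsGT_neBot 0⟩
  have hcd : ∀ h : X, clarkeDeriv (fun x => f' x d) x₀ h = f'' x₀ h d := fun h =>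
    (clarke_tendsto hD hf'' hx₀ hcont d h).limsup_eq
  ext L
  simp only [secondSubdiff, clarkeSubdiff, Set.mem_setOf_eq, Set.mem_singleton_iff]
  constructor
  · intro hL
    ext v
    have h1 := hL v
    rw [hcd v] at h1
    have h2 := hL (-v)
    rw [hcd (-v)] at h2
    simp only [map_neg, ContinuousLinearMap.neg_apply] at h2
    have h3 := hsymm v d
    show L v = f'' x₀ d v
    linarith
  · intro hL h
    rw [hL, hcd h]
    exact le_of_eq (hsymm d h)
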